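/- Let u : ℝ³ → ℝ be a C³ solution of u_yy = u_tx + u_y·u_xx − u_x·u_xy. Then the function v(t,x,y) := 2x − y·u_x(t,x,y) satisfies the linearized equation v_yy = v_tx + u_y·v_xx + u_xx·v_y − u_x·v_xy − u_xy·v_x at every point of ℝ³. -/

import Mathlib

/-- Partial derivative of `f : ℝ³ → ℝ` in the direction `v`. -/
noncomputable def pd3 (v : ℝ × ℝ × ℝ) (f : ℝ × ℝ × ℝ → ℝ) : ℝ × ℝ × ℝ → ℝ :=
  fun p => fderiv ℝ f p v

noncomputable def dt : (ℝ × ℝ × ℝ → ℝ) → ℝ × ℝ × ℝ → ℝ := pd3 (1, 0, 0)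
noncomputable def dx : (ℝ × ℝ × ℝ → ℝ) → ℝ × ℝ × ℝ → ℝ := pd3 (0, 1, 0)
noncomputable def dy : (ℝ × ℝ × ℝ → ℝ) → ℝ × ℝ × ℝ → ℝ := pd3 (0, 0, 1)

lemma contDiff_pd3 {n : ℕ∞} (v : ℝ × ℝ × ℝ) {f : ℝ × ℝ × ℝ → ℝ}
    (hf : ContDiff ℝ (n + 1) f) : ContDiff ℝ n (pd3 v f) :=
  (hf.fderiv_right le_rfl).clm_apply contDiff_const

lemma pd3_sub (v : ℝ × ℝ × ℝ) {f g : ℝ × ℝ × ℝ → ℝ} {p : ℝ × ℝ × ℝ}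
    (hf : DifferentiableAt ℝ f p) (hg : DifferentiableAt ℝ g p) :
    pd3 v (fun q => f q - g q) p = pd3 v f p - pd3 v g p := by
  simp [pd3, fderiv_fun_sub hf hg]

lemma pd3_add (v : ℝ × ℝ × ℝ) {f g : ℝ × ℝ × ℝ → ℝ} {p : ℝ × ℝ × ℝ}
    (hf : DifferentiableAt ℝ f p) (hg : DifferentiableAt ℝ g p) :
    pd3 v (fun q => f q + g q) p = pd3 v f p + pd3 v g p := by
  simp [pd3, fderiv_fun_add hf hg]

lemma pd3_neg (v : ℝ × ℝ × ℝ) {f : ℝ × ℝ × ℝ → ℝ} {p : ℝ × ℝ × ℝ} :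
    pd3 v (fun q => -(f q)) p = -(pd3 v f p) := by
  simp [pd3, fderiv_neg]

lemma pd3_mul (v : ℝ × ℝ × ℝ) {f g : ℝ × ℝ × ℝ → ℝ} {p : ℝ × ℝ × ℝ}
    (hf : DifferentiableAt ℝ f p) (hg : DifferentiableAt ℝ g p) :
    pd3 v (fun q => f q * g q) p = pd3 v f p * g p + f p * pd3 v g p := by
  simp [pd3, fderiv_fun_mul hf hg]; ring

lemma pd3_cmul (v : ℝ × ℝ × ℝ) (c : ℝ) {f : ℝ × ℝ × ℝ → ℝ} {p : ℝ × ℝ × ℝ}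
    (hf : DifferentiableAt ℝ f p) :
    pd3 v (fun q => c * f q) p = c * pd3 v f p := by
  simp [pd3, fderiv_const_mul hf]

lemma pd3_const (v : ℝ × ℝ × ℝ) (c : ℝ) (p : ℝ × ℝ × ℝ) :
    pd3 v (fun _ => c) p = 0 := by
  simp [pd3]

lemma pd3_x (v : ℝ × ℝ × ℝ) (p : ℝ × ℝ × ℝ) :
    pd3 v (fun q : ℝ × ℝ × ℝ => q.2.1) p = v.2.1 := by
  have h : (fun q : ℝ × ℝ × ℝ => q.2.1)
      = ((ContinuousLinearMap.fst ℝ ℝ ℝ).comp (ContinuousLinearMap.snd ℝ ℝ (ℝ × ℝ)) :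
        ℝ × ℝ × ℝ →L[ℝ] ℝ) := rfl
  rw [pd3] at *
  rw [h, ContinuousLinearMap.fderiv]
  rfl

lemma pd3_y (v : ℝ × ℝ × ℝ) (p : ℝ × ℝ × ℝ) :
    pd3 v (fun q : ℝ × ℝ × ℝ => q.2.2) p = v.2.2 := by
  have h : (fun q : ℝ × ℝ × ℝ => q.2.2)
      = ((ContinuousLinearMap.snd ℝ ℝ ℝ).comp (ContinuousLinearMap.snd ℝ ℝ (ℝ × ℝ)) :
        ℝ × ℝ × ℝ →L[ℝ] ℝ) := rfl
  rw [pd3] at *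
  rw [h, ContinuousLinearMap.fderiv]
  rfl

lemma pd3_pd3 (v w : ℝ × ℝ × ℝ) {f : ℝ × ℝ × ℝ → ℝ} (hf : ContDiff ℝ 2 f) (p : ℝ × ℝ × ℝ) :
    pd3 v (pd3 w f) p = fderiv ℝ (fderiv ℝ f) p v w := by
  have h1 : DifferentiableAt ℝ (fderiv ℝ f) p :=
    ((hf.fderiv_right (m := 1) (by norm_num)).differentiable (by norm_num)).differentiableAt
  show fderiv ℝ (fun q => fderiv ℝ f q w) p v = _
  rw [fderiv_clm_apply h1 (differentiableAt_const w)]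
  simp

lemma pd3_comm (v w : ℝ × ℝ × ℝ) {f : ℝ × ℝ × ℝ → ℝ} (hf : ContDiff ℝ 2 f) (p : ℝ × ℝ × ℝ) :
    pd3 v (pd3 w f) p = pd3 w (pd3 v f) p := by
  rw [pd3_pd3 v w hf p, pd3_pd3 w v hf p]
  exact hf.contDiffAt.isSymmSndFDerivAt (by norm_num) v w

theorem theta1_is_symmetry (u : ℝ × ℝ × ℝ → ℝ) (hu : ContDiff ℝ 3 u)
    (heq : ∀ p : ℝ × ℝ × ℝ,
      dy (dy u) p = dt (dx u) p + dy u p * dx (dx u) p - dx u p * dx (dy u) p) :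
    ∀ p : ℝ × ℝ × ℝ,
      (fun v : ℝ × ℝ × ℝ → ℝ =>
        dy (dy v) p = dt (dx v) p + dy u p * dx (dx v) p + dx (dx u) p * dy v p
          - dx u p * dx (dy v) p - dx (dy u) p * dx v p)
      (fun q => 2 * q.2.1 - q.2.2 * dx u q) := by
  intro p
  simp only [dt, dx, dy] at heq ⊢
  have hu2 : ContDiff ℝ 2 u := hu.of_le (by norm_num)
  have hu3' : ContDiff ℝ ((2 : ℕ∞) + 1) u := hu.of_le (by norm_num)
  have hux2 : ContDiff ℝ 2 (pd3 (0,1,0) u) := contDiff_pd3 _ hu3'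
  have huy2 : ContDiff ℝ 2 (pd3 (0,0,1) u) := contDiff_pd3 _ hu3'
  have hux1 : ContDiff ℝ ((1:ℕ∞)+1) (pd3 (0,1,0) u) := hux2.of_le (by norm_num)
  have huy1 : ContDiff ℝ ((1:ℕ∞)+1) (pd3 (0,0,1) u) := huy2.of_le (by norm_num)
  have hxx : ContDiff ℝ 1 (pd3 (0,1,0) (pd3 (0,1,0) u)) := contDiff_pd3 _ hux1
  have hyx : ContDiff ℝ 1 (pd3 (0,0,1) (pd3 (0,1,0) u)) := contDiff_pd3 _ hux1
  have htx : ContDiff ℝ 1 (pd3 (1,0,0) (pd3 (0,1,0) u)) := contDiff_pd3 _ hux1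
  have hxy : ContDiff ℝ 1 (pd3 (0,1,0) (pd3 (0,0,1) u)) := contDiff_pd3 _ huy1
  have dux : Differentiable ℝ (pd3 (0,1,0) u) := hux2.differentiable (by norm_num)
  have duy : Differentiable ℝ (pd3 (0,0,1) u) := huy2.differentiable (by norm_num)
  have dxx := hxx.differentiable (by norm_num)
  have dyx := hyx.differentiable (by norm_num)
  have dtx := htx.differentiable (by norm_num)
  have dxy := hxy.differentiable (by norm_num)
  have dy2 : Differentiable ℝ (fun q : ℝ × ℝ × ℝ => q.2.2) := by fun_prop
  -- first derivative of v in any direction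
  have pdv : ∀ (w q : ℝ × ℝ × ℝ),
      pd3 w (fun q => 2 * q.2.1 - q.2.2 * pd3 (0,1,0) u q) q
        = 2 * w.2.1 - (w.2.2 * pd3 (0,1,0) u q + q.2.2 * pd3 w (pd3 (0,1,0) u) q) := by
    intro w q
    have h1 : DifferentiableAt ℝ (fun q : ℝ × ℝ × ℝ => 2 * q.2.1) q := by fun_prop
    have h2 : DifferentiableAt ℝ (fun q : ℝ × ℝ × ℝ => q.2.2 * pd3 (0,1,0) u q) q :=
      (dy2 q).mul (dux q)
    have h3 : DifferentiableAt ℝ (fun q : ℝ × ℝ × ℝ => q.2.1) q := by fun_prop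
    rw [pd3_sub w h1 h2, pd3_cmul w 2 h3, pd3_x, pd3_mul w (dy2 q) (dux q), pd3_y]
  have hvx : pd3 (0,1,0) (fun q => 2 * q.2.1 - q.2.2 * pd3 (0,1,0) u q)
      = fun q => 2 - q.2.2 * pd3 (0,1,0) (pd3 (0,1,0) u) q := by
    funext q; rw [pdv]; norm_num
  have hvy : pd3 (0,0,1) (fun q => 2 * q.2.1 - q.2.2 * pd3 (0,1,0) u q)
      = fun q => -(pd3 (0,1,0) u q + q.2.2 * pd3 (0,0,1) (pd3 (0,1,0) u) q) := by
    funext q; rw [pdv]; norm_num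
  -- second derivatives
  have hD2 : ∀ (w q : ℝ × ℝ × ℝ),
      pd3 w (fun q => 2 - q.2.2 * pd3 (0,1,0) (pd3 (0,1,0) u) q) q
        = -(w.2.2 * pd3 (0,1,0) (pd3 (0,1,0) u) q
            + q.2.2 * pd3 w (pd3 (0,1,0) (pd3 (0,1,0) u)) q) := by
    intro w q
    have h1 : DifferentiableAt ℝ (fun _ : ℝ × ℝ × ℝ => (2:ℝ)) q := differentiableAt_const 2
    have h2 : DifferentiableAt ℝ
        (fun q : ℝ × ℝ × ℝ => q.2.2 * pd3 (0,1,0) (pd3 (0,1,0) u) q) q := (dy2 q).mul (dxx q)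
    rw [pd3_sub w h1 h2, pd3_const, pd3_mul w (dy2 q) (dxx q), pd3_y]
    ring
  have hDy2 : ∀ (w q : ℝ × ℝ × ℝ),
      pd3 w (fun q => -(pd3 (0,1,0) u q + q.2.2 * pd3 (0,0,1) (pd3 (0,1,0) u) q)) q
        = -(pd3 w (pd3 (0,1,0) u) q + (w.2.2 * pd3 (0,0,1) (pd3 (0,1,0) u) q
            + q.2.2 * pd3 w (pd3 (0,0,1) (pd3 (0,1,0) u)) q)) := by
    intro w q
    have h2 : DifferentiableAt ℝ
        (fun q : ℝ × ℝ × ℝ => q.2.2 * pd3 (0,0,1) (pd3 (0,1,0) u) q) q := (dy2 q).mul (dyx q)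
    rw [pd3_neg w
        (f := fun q => pd3 (0,1,0) u q + q.2.2 * pd3 (0,0,1) (pd3 (0,1,0) u) q),
      pd3_add w (dux q) h2, pd3_mul w (dy2 q) (dyx q), pd3_y]
  -- differentiate the equation in x
  have hequ : pd3 (0,0,1) (pd3 (0,0,1) u)
      = fun q => pd3 (1,0,0) (pd3 (0,1,0) u) q
          + pd3 (0,0,1) u q * pd3 (0,1,0) (pd3 (0,1,0) u) q
          - pd3 (0,1,0) u q * pd3 (0,1,0) (pd3 (0,0,1) u) q := funext heq
  have hx : ∀ q : ℝ × ℝ × ℝ, pd3 (0,1,0) (pd3 (0,0,1) (pd3 (0,0,1) u)) q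
      = pd3 (0,1,0) (pd3 (1,0,0) (pd3 (0,1,0) u)) q
        + (pd3 (0,1,0) (pd3 (0,0,1) u) q * pd3 (0,1,0) (pd3 (0,1,0) u) q
            + pd3 (0,0,1) u q * pd3 (0,1,0) (pd3 (0,1,0) (pd3 (0,1,0) u)) q)
        - (pd3 (0,1,0) (pd3 (0,1,0) u) q * pd3 (0,1,0) (pd3 (0,0,1) u) q
            + pd3 (0,1,0) u q * pd3 (0,1,0) (pd3 (0,1,0) (pd3 (0,0,1) u)) q) := by
    intro q
    have h1 : DifferentiableAt ℝ (pd3 (1,0,0) (pd3 (0,1,0) u)) q := dtx q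
    have h2 : DifferentiableAt ℝ
        (fun q => pd3 (0,0,1) u q * pd3 (0,1,0) (pd3 (0,1,0) u) q) q := (duy q).mul (dxx q)
    have h3 : DifferentiableAt ℝ
        (fun q => pd3 (0,1,0) u q * pd3 (0,1,0) (pd3 (0,0,1) u) q) q := (dux q).mul (dxy q)
    have h12 : DifferentiableAt ℝ
        (fun q => pd3 (1,0,0) (pd3 (0,1,0) u) q
          + pd3 (0,0,1) u q * pd3 (0,1,0) (pd3 (0,1,0) u) q) q := h1.add h2
    rw [hequ, pd3_sub _ h12 h3, pd3_add _ h1 h2, pd3_mul _ (duy q) (dxx q),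
      pd3_mul _ (dux q) (dxy q)]
  -- commutation of derivatives
  have c1 : pd3 (0,0,1) (pd3 (0,1,0) u) = pd3 (0,1,0) (pd3 (0,0,1) u) :=
    funext fun q => pd3_comm _ _ hu2 q
  have c3 : pd3 (1,0,0) (pd3 (0,1,0) (pd3 (0,1,0) u)) p
      = pd3 (0,1,0) (pd3 (1,0,0) (pd3 (0,1,0) u)) p := pd3_comm _ _ hux2 p
  have cc : pd3 (0,0,1) (pd3 (0,1,0) (pd3 (0,0,1) u)) p
      = pd3 (0,1,0) (pd3 (0,0,1) (pd3 (0,0,1) u)) p := pd3_comm _ _ huy2 p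
  -- assemble
  rw [hvx, hvy, hD2 (1,0,0) p, hD2 (0,1,0) p, hDy2 (0,0,1) p, hDy2 (0,1,0) p]
  beta_reduce
  rw [c1, cc, c3]
  norm_num
  linear_combination (-(p.2.2)) * hx p
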